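/- Let n ≥ 1 and let X be a subgroup of the weight lattice Λ of SL(n+1). Then Λ_R ⊆ X ⊆ Λ if and only if there exists d ∈ ℕ with d | (n+1) such that X = ⟨α_2, α_3, …, α_n, d·ω_n⟩_ℤ. -/

import Mathlib

/-- The fundamental weights `ω_1, …, ω_n` of `SL(n+1)` in the weight lattice
`Λ = ℤⁿ`: `ω_j` is the `j`-th standard basis vector for `1 ≤ j ≤ n`, and by
convention `ω_0 = ω_{n+1} = 0`. -/
def w (n : ℕ) (j : ℕ) : Fin n → ℤ := fun i => if (i : ℕ) + 1 = j then 1 else 0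

/-- The simple roots of `SL(n+1)`: `α_i = 2ω_i − ω_{i−1} − ω_{i+1}` for `1 ≤ i ≤ n`. -/
def sroot (n : ℕ) (i : ℕ) : Fin n → ℤ := 2 • w n i - w n (i - 1) - w n (i + 1)

lemma w_zero (n : ℕ) : w n 0 = 0 := by
  funext i; simp [w]

lemma w_gt (n j : ℕ) (h : n < j) : w n j = 0 := by
  funext i; simp only [w, Pi.zero_apply, ite_eq_right_iff]
  intro hi; exfalso; omega

def phi (n : ℕ) : (Fin n → ℤ) →ₗ[ℤ] ℤ where
  toFun v := ∑ i : Fin n, ((n : ℤ) - (i : ℕ)) * v i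
  map_add' x y := by simp [mul_add, Finset.sum_add_distrib]
  map_smul' c x := by simp [Finset.mul_sum, mul_left_comm]

lemma phi_apply (n : ℕ) (v : Fin n → ℤ) : phi n v = ∑ i : Fin n, ((n : ℤ) - (i : ℕ)) * v i := rfl

lemma phi_w (n j : ℕ) (h1 : 1 ≤ j) (h2 : j ≤ n) :
    phi n (w n j) = (n : ℤ) + 1 - j := by
  rw [phi_apply]
  have hj : j - 1 < n := by omega
  have hcond : ∀ i : Fin n, ((i : ℕ) + 1 = j) ↔ i = ⟨j - 1, hj⟩ := by
    intro i
    constructor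
    · intro h; ext; simp; omega
    · intro h; subst h; simp; omega
  simp only [w, mul_ite, mul_one, mul_zero]
  rw [Finset.sum_congr rfl (fun i _ => by rw [if_congr (hcond i) rfl rfl])]
  rw [Finset.sum_ite_eq' Finset.univ]
  simp only [Finset.mem_univ, if_true]
  have : ((j - 1 : ℕ) : ℤ) = (j : ℤ) - 1 := by omega
  rw [this]; ring

lemma phi_sroot (n i : ℕ) (h1 : 2 ≤ i) (h2 : i ≤ n) : phi n (sroot n i) = 0 := by
  unfold sroot
  rw [map_sub, map_sub, map_nsmul]
  have hm : ((i - 1 : ℕ) : ℤ) = (i : ℤ) - 1 := by omega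
  rcases eq_or_lt_of_le h2 with h | h
  · rw [w_gt n (i+1) (by omega), map_zero, phi_w n i (by omega) h2,
      phi_w n (i-1) (by omega) (by omega), hm, two_smul]
    omega
  · rw [phi_w n i (by omega) (by omega), phi_w n (i-1) (by omega) (by omega),
      phi_w n (i+1) (by omega) (by omega), hm, two_smul]
    push_cast
    ring

lemma phi_sroot1 (n : ℕ) (hn : 1 ≤ n) : phi n (sroot n 1) = (n : ℤ) + 1 := by
  unfold sroot
  rw [map_sub, map_sub, map_nsmul]
  rw [show (1 : ℕ) - 1 = 0 from rfl, w_zero, map_zero, two_smul]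
  rcases eq_or_lt_of_le hn with h | h
  · rw [w_gt n 2 (by omega), map_zero, phi_w n 1 le_rfl hn]
    omega
  · rw [phi_w n 1 le_rfl hn, phi_w n 2 (by omega) (by omega)]
    push_cast
    ring

lemma phi_wn (n : ℕ) (hn : 1 ≤ n) : phi n (w n n) = 1 := by
  rw [phi_w n n hn le_rfl]; ring

/-- `u_j := ω_j − (n+1−j)ω_n` lies in the span of `α_2, …, α_n`. -/
lemma u_mem (n : ℕ) : ∀ m j : ℕ, j = n - m → 1 ≤ j → j ≤ n →
    w n j - ((n : ℤ) + 1 - j) • w n n ∈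
      Submodule.span ℤ (sroot n '' Set.Icc 2 n) := by
  intro m
  induction m using Nat.strong_induction_on with
  | _ m ih =>
    intro j hj h1 h2
    rcases Nat.lt_or_ge j n with hlt | hge
    · rcases Nat.lt_or_ge (j+1) n with hlt2 | hge2
      · -- j + 2 ≤ n : use recurrence u_j = 2 u_{j+1} - u_{j+2} - α_{j+1}
        have hu1 := ih (n - (j+1)) (by omega) (j+1) (by omega) (by omega) (by omega)
        have hu2 := ih (n - (j+2)) (by omega) (j+2) (by omega) (by omega) (by omega)
        have hα : sroot n (j+1) ∈ Submodule.span ℤ (sroot n '' Set.Icc 2 n) :=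
          Submodule.subset_span ⟨j+1, by simp [Set.mem_Icc]; omega⟩
        have hEq : w n j - ((n : ℤ) + 1 - j) • w n n =
            (2 : ℤ) • (w n (j+1) - ((n : ℤ) + 1 - (j+1)) • w n n)
            - (w n (j+2) - ((n : ℤ) + 1 - (j+2)) • w n n) - sroot n (j+1) := by
          unfold sroot
          have : (j + 1 : ℕ) - 1 = j := by omega
          rw [this]
          push_cast
          module
        rw [hEq]
        exact Submodule.sub_mem _ (Submodule.sub_mem _
          (Submodule.smul_mem _ _ hu1) hu2) hα
      · -- j = n - 1 : u_j = -α_n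
        have hjn : j = n - 1 := by omega
        have hn2 : 2 ≤ n := by omega
        have hα : sroot n n ∈ Submodule.span ℤ (sroot n '' Set.Icc 2 n) :=
          Submodule.subset_span ⟨n, by simp [Set.mem_Icc]; omega⟩
        have hEq : w n j - ((n : ℤ) + 1 - j) • w n n = -sroot n n := by
          unfold sroot
          rw [w_gt n (n+1) (by omega)]
          have h1' : n - 1 = j := by omega
          rw [h1']
          have : ((n : ℤ) + 1 - j) = 2 := by omega
          rw [this]
          module
        rw [hEq]
        exact Submodule.neg_mem _ hα
    · have hjn : j = n := by omega
      have : w n j - ((n : ℤ) + 1 - j) • w n n = 0 := by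
        rw [hjn]
        have : ((n : ℤ) + 1 - n) = 1 := by ring
        rw [this, one_smul, sub_self]
      rw [this]
      exact Submodule.zero_mem _

/-- Every vector is congruent to `φ(v) • ω_n` modulo the span of `α_2, …, α_n`. -/
lemma decompose (n : ℕ) (hn : 1 ≤ n) (v : Fin n → ℤ) :
    v - phi n v • w n n ∈ Submodule.span ℤ (sroot n '' Set.Icc 2 n) := by
  have hv : v - phi n v • w n n
      = ∑ i : Fin n, v i • (w n ((i : ℕ) + 1) - ((n : ℤ) - (i : ℕ)) • w n n) := by
    have h1 : v = ∑ i : Fin n, v i • w n ((i : ℕ) + 1) := by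
      funext k
      rw [Finset.sum_apply]
      simp only [Pi.smul_apply, w, smul_eq_mul, mul_ite, mul_one, mul_zero]
      have : ∀ i : Fin n, ((k : ℕ) + 1 = (i : ℕ) + 1) ↔ i = k := by
        intro i; constructor
        · intro h; ext; omega
        · intro h; subst h; rfl
      rw [Finset.sum_congr rfl (fun i _ => by rw [if_congr (this i) rfl rfl])]
      rw [Finset.sum_ite_eq' Finset.univ k v]
      simp
    have h2 : phi n v • w n n = ∑ i : Fin n, v i • (((n : ℤ) - (i : ℕ)) • w n n) := by
      rw [phi_apply, Finset.sum_smul]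
      exact Finset.sum_congr rfl fun i _ => by rw [smul_smul, mul_comm]
    calc v - phi n v • w n n
        = (∑ i : Fin n, v i • w n ((i : ℕ) + 1))
            - ∑ i : Fin n, v i • (((n : ℤ) - (i : ℕ)) • w n n) := by rw [← h1, ← h2]
      _ = ∑ i : Fin n, v i • (w n ((i : ℕ) + 1) - ((n : ℤ) - (i : ℕ)) • w n n) := by
          rw [← Finset.sum_sub_distrib]
          exact Finset.sum_congr rfl fun i _ => (smul_sub _ _ _).symm
  rw [hv]
  refine Submodule.sum_mem _ fun i _ => Submodule.smul_mem _ _ ?_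
  have := u_mem n (n - ((i : ℕ) + 1)) ((i : ℕ) + 1) (by omega) (by omega) (by omega)
  have hco : ((n : ℤ) + 1 - ((i : ℕ) + 1 : ℕ)) = (n : ℤ) - (i : ℕ) := by push_cast; ring
  rwa [hco] at this

/-- For `n ≥ 1` and a subgroup `X` of the weight lattice `Λ` of `SL(n+1)`:
`Λ_R ⊆ X ⊆ Λ` if and only if `X = ⟨α_2, α_3, …, α_n, d·ω_n⟩_ℤ` for some `d ∈ ℕ`
with `d ∣ (n+1)`. (The inclusion `X ⊆ Λ` is automatic for a subgroup of `Λ`.) -/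
theorem stmt4 (n : ℕ) (hn : 1 ≤ n) (X : Submodule ℤ (Fin n → ℤ)) :
    Submodule.span ℤ (sroot n '' Set.Icc 1 n) ≤ X ↔
      ∃ d : ℕ, d ∣ (n + 1) ∧
        X = Submodule.span ℤ (sroot n '' Set.Icc 2 n ∪ {(d : ℤ) • w n n}) := by

  set S := Submodule.span ℤ (sroot n '' Set.Icc 2 n) with hS
  constructor
  · intro h
    -- S ≤ X and α₁ ∈ X
    have hSX : S ≤ X := le_trans (Submodule.span_mono
      (Set.image_mono (Set.Icc_subset_Icc (by omega) le_rfl))) h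
    have hα1 : sroot n 1 ∈ X := h (Submodule.subset_span ⟨1, by simp [Set.mem_Icc]; omega⟩)
    -- the ideal of values of φ on X
    set D : Submodule ℤ ℤ := Submodule.map (phi n) X with hD
    obtain ⟨g, hg⟩ := (inferInstance : D.IsPrincipal)
    have hn1D : ((n : ℤ) + 1) ∈ D := ⟨sroot n 1, hα1, phi_sroot1 n hn⟩
    have hgdvd : g ∣ (n : ℤ) + 1 := by
      rw [hg] at hn1D
      obtain ⟨c, hc⟩ := Submodule.mem_span_singleton.mp hn1D
      exact ⟨c, by rw [← hc, smul_eq_mul, mul_comm]⟩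
    -- g • ω_n ∈ X
    have hgX : g • w n n ∈ X := by
      have hgD : g ∈ D := by
        rw [hg]; exact Submodule.mem_span_singleton_self g
      obtain ⟨x, hxX, hx⟩ := hgD
      have h1 := decompose n hn x
      have : phi n x • w n n = x - (x - phi n x • w n n) := by ring_nf
      rw [← hx, this]
      exact Submodule.sub_mem _ hxX (hSX h1)
    have hdX : ((g.natAbs : ℤ)) • w n n ∈ X := by
      rcases Int.natAbs_eq g with he | he
      · rwa [← he]
      · have : ((g.natAbs : ℤ)) • w n n = -(g • w n n) := by
          rw [show ((g.natAbs : ℤ)) = -g by omega, neg_smul]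
        rw [this]
        exact Submodule.neg_mem _ hgX
    refine ⟨g.natAbs, ?_, ?_⟩
    · have h2 := Int.natAbs_dvd_natAbs.mpr hgdvd
      have h3 : ((n : ℤ) + 1).natAbs = n + 1 := by
        rw [show ((n : ℤ) + 1) = ((n + 1 : ℕ) : ℤ) by push_cast; ring, Int.natAbs_natCast]
      rwa [h3] at h2
    · set T := Submodule.span ℤ (sroot n '' Set.Icc 2 n ∪ {((g.natAbs : ℤ)) • w n n})
        with hT
      have hST : S ≤ T := Submodule.span_mono Set.subset_union_left
      have hdT : ((g.natAbs : ℤ)) • w n n ∈ T :=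
        Submodule.subset_span (Or.inr rfl)
      have hgT : g • w n n ∈ T := by
        rcases Int.natAbs_eq g with he | he
        · rw [he]; exact hdT
        · have : g • w n n = -(((g.natAbs : ℤ)) • w n n) := by
            conv_lhs => rw [he]
            rw [neg_smul]
          rw [this]
          exact Submodule.neg_mem _ hdT
      apply le_antisymm
      · intro x hx
        have hφ : phi n x ∈ D := ⟨x, hx, rfl⟩
        rw [hg] at hφ
        obtain ⟨c, hc⟩ := Submodule.mem_span_singleton.mp hφ
        have hdecomp := decompose n hn x
        have : x = (x - phi n x • w n n) + c • (g • w n n) := by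
          rw [smul_smul, show c * g = phi n x by rw [← smul_eq_mul, hc]]; ring_nf
        rw [this]
        exact Submodule.add_mem _ (hST hdecomp) (Submodule.smul_mem _ _ hgT)
      · rw [hT, Submodule.span_le]
        rintro y (⟨i, hi, rfl⟩ | hy)
        · simp only [Set.mem_Icc] at hi
          exact hSX (Submodule.subset_span ⟨i, by simp [Set.mem_Icc]; omega⟩)
        · simp only [Set.mem_singleton_iff] at hy
          rw [hy]
          exact hdX
  · rintro ⟨d, hd, rfl⟩
    rw [Submodule.span_le]
    rintro y ⟨i, hi, rfl⟩
    simp only [Set.mem_Icc] at hi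
    rcases Nat.lt_or_ge i 2 with h2 | h2
    · -- i = 1
      have hi1 : i = 1 := by omega
      subst hi1
      obtain ⟨k, hk⟩ := hd
      have hdT : ((d : ℤ)) • w n n ∈
          Submodule.span ℤ (sroot n '' Set.Icc 2 n ∪ {((d : ℤ)) • w n n}) :=
        Submodule.subset_span (Or.inr rfl)
      have hST : S ≤
          Submodule.span ℤ (sroot n '' Set.Icc 2 n ∪ {((d : ℤ)) • w n n}) :=
        Submodule.span_mono Set.subset_union_left
      have hdecomp := decompose n hn (sroot n 1)
      have hkey : sroot n 1 = (sroot n 1 - phi n (sroot n 1) • w n n)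
          + (k : ℤ) • (((d : ℤ)) • w n n) := by
        rw [smul_smul, phi_sroot1 n hn]
        have : ((n : ℤ) + 1) = (k : ℤ) * (d : ℤ) := by
          rw [mul_comm]
          exact_mod_cast congrArg (fun m : ℕ => (m : ℤ)) hk
        rw [this]
        ring_nf
      rw [hkey]
      exact Submodule.add_mem _ (hST hdecomp) (Submodule.smul_mem _ _ hdT)
    · exact Submodule.subset_span (Or.inl ⟨i, by simp [Set.mem_Icc]; omega⟩)
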